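/- Let H be a commutative monoid whose associated reduced monoid is finitely generated. Then the monotone catenary degree c_mon(H) is finite. -/

import Mathlib

/-- `s` is a factorization of `a`: a multiset of atoms of the reduced monoid
`H_red = Associates H` whose product is the class of `a`. -/
def IsFactorizationOf {H : Type*} [CommMonoid H]
    (s : Multiset (Associates H)) (a : H) : Prop :=
  (∀ x ∈ s, Irreducible x) ∧ s.prod = Associates.mk a

/-- The set of lengths `L(a)` of `a`. -/
def Lengths {H : Type*} [CommMonoid H] (a : H) : Set ℕ :=
  {n | ∃ s : Multiset (Associates H), IsFactorizationOf s a ∧ s.card = n}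

/-- The distance between two factorizations:
`d(z,z') = max {|z ⬝ gcd(z,z')⁻¹|, |z' ⬝ gcd(z,z')⁻¹|}`. -/
def factorizationDist {H : Type*} [CommMonoid H] [DecidableEq (Associates H)]
    (s t : Multiset (Associates H)) : ℕ :=
  max (s - t).card (t - s).card

/-- `k` and `l` are adjacent lengths of `a`:
`L(a) ∩ [min {k,l}, max {k,l}] = {k, l}` with `k ≠ l`. -/
def AdjacentLengths {H : Type*} [CommMonoid H] (a : H) (k l : ℕ) : Prop :=
  k ≠ l ∧ k ∈ Lengths a ∧ l ∈ Lengths a ∧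
    ∀ m ∈ Lengths a, min k l ≤ m → m ≤ max k l → m = k ∨ m = l

/-- `z` and `z'` can be concatenated by a monotone `N`-chain of factorizations of `a`. -/
def MonotoneNChain {H : Type*} [CommMonoid H] [DecidableEq (Associates H)]
    (a : H) (N : ℕ) (z z' : Multiset (Associates H)) : Prop :=
  ∃ (n : ℕ) (c : ℕ → Multiset (Associates H)), c 0 = z ∧ c n = z' ∧
    (∀ i ≤ n, IsFactorizationOf (c i) a) ∧
    (∀ i < n, factorizationDist (c i) (c (i + 1)) ≤ N) ∧
    ((∀ i j, i ≤ j → j ≤ n → (c i).card ≤ (c j).card) ∨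
     (∀ i j, i ≤ j → j ≤ n → (c j).card ≤ (c i).card))


/-- One elementary step: replace a sub-multiset `p` by `q` (or conversely),
where `(p, q)` belongs to a fixed finite relation `R`. -/
def StepRel {G : Type*} [AddCommMonoid G] (R : Finset (G × G)) (u v : G) : Prop :=
  ∃ p q t, ((p, q) ∈ R ∨ (q, p) ∈ R) ∧ u = p + t ∧ v = q + t

theorem stepRel_symm {G : Type*} [AddCommMonoid G] (R : Finset (G × G)) :
    Symmetric (StepRel R) := by
  rintro a b ⟨p, q, t, hpq, h1, h2⟩
  exact ⟨q, p, t, hpq.symm, h2, h1⟩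

theorem stepRel_add_right {G : Type*} [AddCommMonoid G] (R : Finset (G × G)) (w : G)
    {a b : G} (h : StepRel R a b) : StepRel R (a + w) (b + w) := by
  obtain ⟨p, q, t, hpq, rfl, rfl⟩ := h
  exact ⟨p, q, t + w, hpq, add_assoc _ _ _, add_assoc _ _ _⟩

theorem rtg_stepRel_add_right {G : Type*} [AddCommMonoid G] (R : Finset (G × G)) (w : G)
    {a b : G} (h : Relation.ReflTransGen (StepRel R) a b) :
    Relation.ReflTransGen (StepRel R) (a + w) (b + w) :=
  Relation.ReflTransGen.lift (fun x => x + w) (fun _ _ hs => stepRel_add_right R w hs) _ _ h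

/-- A Rédei-type finiteness theorem: for any binary relation `σ` on the free
commutative monoid `P →₀ ℕ` (with `P` finite) there is a finite subrelation `R ⊆ σ`
such that any `σ`-related pair is connected by a chain of elementary `R`-steps. -/
theorem redei_fin {P : Type*} [Finite P] [DecidableEq P]
    (σ : (P →₀ ℕ) → (P →₀ ℕ) → Prop) :
    ∃ R : Finset ((P →₀ ℕ) × (P →₀ ℕ)),
      (∀ pq ∈ R, σ pq.1 pq.2) ∧
      ∀ u v, σ u v → Relation.ReflTransGen (StepRel R) u v := by
  classical
  let X : (P →₀ ℕ) → AddMonoidAlgebra ℚ (P →₀ ℕ) := fun u => AddMonoidAlgebra.single u (1 : ℚ)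
  let B : Set (AddMonoidAlgebra ℚ (P →₀ ℕ)) := {b | ∃ u v, σ u v ∧ b = X u - X v}
  haveI : IsNoetherianRing (AddMonoidAlgebra ℚ (P →₀ ℕ)) :=
    inferInstanceAs (IsNoetherianRing (MvPolynomial P ℚ))
  have hIfg : (Ideal.span B).FG := IsNoetherian.noetherian _
  obtain ⟨G, hG⟩ := hIfg
  have hmem : ∀ g ∈ G, (g : AddMonoidAlgebra ℚ (P →₀ ℕ)) ∈ Ideal.span B := by
    intro g hg
    rw [← hG]
    exact Ideal.subset_span hg
  have hmem' : ∀ g ∈ G, (g : AddMonoidAlgebra ℚ (P →₀ ℕ)) ∈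
      Submodule.span (AddMonoidAlgebra ℚ (P →₀ ℕ)) B := fun g hg => hmem g hg
  choose t ht1 ht2 using fun g hg => Submodule.mem_span_finite_of_mem_span (hmem' g hg)
  let T : Finset (AddMonoidAlgebra ℚ (P →₀ ℕ)) := G.attach.biUnion fun g => t g.1 g.2
  have hTB : (T : Set (AddMonoidAlgebra ℚ (P →₀ ℕ))) ⊆ B := by
    intro b hb
    simp only [T, Finset.coe_biUnion, Set.mem_iUnion, Finset.mem_coe, Finset.mem_attach] at hb
    obtain ⟨g, -, hbg⟩ := hb
    exact ht1 g.1 g.2 hbg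
  have hIT : Ideal.span B ≤ Submodule.span (AddMonoidAlgebra ℚ (P →₀ ℕ)) (T : Set (AddMonoidAlgebra ℚ (P →₀ ℕ))) := by
    rw [← hG]
    refine Submodule.span_le.mpr ?_
    intro g hg
    have hsub : (↑(t g hg) : Set (AddMonoidAlgebra ℚ (P →₀ ℕ))) ⊆ ↑T := by
      intro b hb
      simp only [T, Finset.coe_biUnion, Set.mem_iUnion, Finset.mem_coe, Finset.mem_attach]
      exact ⟨⟨g, hg⟩, trivial, hb⟩
    exact Submodule.span_mono hsub (ht2 g hg)
  have hTpair : ∀ b ∈ T, ∃ u v, σ u v ∧ b = X u - X v := fun b hb => hTB hb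
  choose pu pv hσp hbe using hTpair
  let R : Finset ((P →₀ ℕ) × (P →₀ ℕ)) := T.attach.image fun b => (pu b.1 b.2, pv b.1 b.2)
  have hR1 : ∀ pq ∈ R, σ pq.1 pq.2 := by
    intro pq hpq
    simp only [R, Finset.mem_image, Finset.mem_attach, true_and] at hpq
    obtain ⟨b, hb⟩ := hpq
    rw [← hb]
    exact hσp b.1 b.2
  set c : AddCon (P →₀ ℕ) := addConGen (fun x y => (x, y) ∈ R) with hc
  let φ : AddMonoidAlgebra ℚ (P →₀ ℕ) →+* AddMonoidAlgebra ℚ c.Quotient :=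
    AddMonoidAlgebra.mapDomainRingHom ℚ (AddCon.mk' c)
  have hφX : ∀ u : (P →₀ ℕ), φ (X u) = AddMonoidAlgebra.single ((AddCon.mk' c) u) (1 : ℚ) := by
    intro u
    simp [φ, X, AddMonoidAlgebra.mapDomain_single]
  have hXker : ∀ b ∈ T, φ b = 0 := by
    intro b hb
    have hR : (pu b hb, pv b hb) ∈ R := by
      refine Finset.mem_image.mpr ⟨⟨b, hb⟩, Finset.mem_attach _ _, rfl⟩
    have hcuv : c (pu b hb) (pv b hb) := AddConGen.Rel.of _ _ hR
    have : (AddCon.mk' c) (pu b hb) = (AddCon.mk' c) (pv b hb) := by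
      rw [AddCon.coe_mk']
      exact (AddCon.eq c).mpr hcuv
    rw [hbe b hb, map_sub, hφX, hφX, this, sub_self]
  have hIker : Ideal.span B ≤ RingHom.ker φ := by
    refine le_trans hIT ?_
    refine Submodule.span_le.mpr ?_
    intro b hb
    exact RingHom.mem_ker.mpr (hXker b hb)
  -- the chain congruence
  let CC : AddCon (P →₀ ℕ) :=
    { r := Relation.ReflTransGen (StepRel R)
      iseqv := ⟨fun _ => Relation.ReflTransGen.refl,
        fun h => by
          haveI : Std.Symm (StepRel R) := ⟨fun _ _ hh => stepRel_symm R hh⟩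
          exact Std.Symm.symm _ _ h,
        fun h1 h2 => Relation.ReflTransGen.trans h1 h2⟩
      add' := by
        intro w x y z h1 h2
        refine Relation.ReflTransGen.trans (rtg_stepRel_add_right R y h1) ?_
        have := rtg_stepRel_add_right R x h2
        rw [add_comm y x, add_comm z x] at this
        exact this }
  have hle : c ≤ CC := by
    refine AddCon.addConGen_le.mpr ?_
    intro x y hxy
    exact Relation.ReflTransGen.single ⟨x, y, 0, Or.inl hxy, (add_zero x).symm, (add_zero y).symm⟩
  refine ⟨R, hR1, ?_⟩
  intro u v huv
  have hXuv : X u - X v ∈ Ideal.span B := Ideal.subset_span ⟨u, v, huv, rfl⟩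
  have h0 : φ (X u - X v) = 0 := hIker hXuv
  rw [map_sub, sub_eq_zero, hφX, hφX] at h0
  have hmk : (AddCon.mk' c) u = (AddCon.mk' c) v :=
    AddMonoidAlgebra.single_left_injective (one_ne_zero : (1 : ℚ) ≠ 0) h0
  have hcuv : c u v := by
    rw [AddCon.coe_mk'] at hmk
    exact (AddCon.eq c).mp hmk
  exact hle hcuv

section Chains

variable {P A : Type*} [DecidableEq P] [CommMonoid A]

/-- The product in `A` of a multiset of atoms. -/
def piF (val : P → A) (s : Multiset P) : A := (s.map val).prod

theorem piF_add (val : P → A) (s t : Multiset P) :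
    piF val (s + t) = piF val s * piF val t := by
  simp [piF, Multiset.map_add, Multiset.prod_add]

/-- A monotone (nondecreasing) chain of factorizations from `s` to `t`
with distances bounded by `N`. -/
def ChainOk (val : P → A) (N : ℕ) (s t : Multiset P) (n : ℕ) (c : ℕ → Multiset P) : Prop :=
  c 0 = s ∧ c n = t ∧ (∀ i ≤ n, piF val (c i) = piF val s) ∧
    (∀ i < n, max ((c i) - (c (i + 1))).card ((c (i + 1)) - (c i)).card ≤ N) ∧
    (∀ i < n, (c i).card ≤ (c (i + 1)).card)

theorem chainOk_mono {val : P → A} {N N' n : ℕ} {s t : Multiset P} {c : ℕ → Multiset P}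
    (h : N ≤ N') (hc : ChainOk val N s t n c) : ChainOk val N' s t n c :=
  ⟨hc.1, hc.2.1, hc.2.2.1, fun i hi => le_trans (hc.2.2.2.1 i hi) h, hc.2.2.2.2⟩

theorem chainOk_single {val : P → A} {N : ℕ} {s t : Multiset P}
    (h1 : piF val s = piF val t) (h2 : max (s - t).card (t - s).card ≤ N)
    (h3 : s.card ≤ t.card) :
    ChainOk val N s t 1 (fun i => if i = 0 then s else t) := by
  refine ⟨by simp, by simp, ?_, ?_, ?_⟩
  · intro i hi
    interval_cases i
    · simp
    · simpa using h1.symm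
  · intro i hi
    have : i = 0 := by omega
    subst this
    simpa using h2
  · intro i hi
    have : i = 0 := by omega
    subst this
    simpa using h3

theorem chainOk_trans {val : P → A} {N : ℕ} {s u t : Multiset P} {n1 n2 : ℕ}
    {c1 c2 : ℕ → Multiset P}
    (h1 : ChainOk val N s u n1 c1) (h2 : ChainOk val N u t n2 c2) :
    ∃ c, ChainOk val N s t (n1 + n2) c := by
  obtain ⟨h10, h11, h12, h13, h14⟩ := h1
  obtain ⟨h20, h21, h22, h23, h24⟩ := h2
  have hπu : piF val u = piF val s := by rw [← h11]; exact h12 n1 le_rfl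
  refine ⟨fun i => if i ≤ n1 then c1 i else c2 (i - n1), ?_, ?_, ?_, ?_, ?_⟩
  · simp [h10]
  · by_cases hn : n1 + n2 ≤ n1
    · have hn2 : n2 = 0 := by omega
      simp only [if_pos hn]
      have he : n1 + n2 = n1 := by omega
      rw [he, h11, ← h21, hn2, h20]
    · simp only [if_neg hn]
      have he : n1 + n2 - n1 = n2 := by omega
      rw [he, h21]
  · intro i hi
    by_cases h : i ≤ n1
    · simp only [if_pos h]
      exact h12 i h
    · simp only [if_neg h]
      rw [h22 (i - n1) (by omega), hπu]
  · intro i hi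
    dsimp only
    by_cases hia : i + 1 ≤ n1
    · rw [if_pos (by omega : i ≤ n1), if_pos hia]
      exact h13 i (by omega)
    · by_cases hib : i ≤ n1
      · have hieq : i = n1 := by omega
        have hn2 : 0 < n2 := by omega
        rw [if_pos hib, if_neg hia, hieq, h11, ← h20]
        have he : n1 + 1 - n1 = 1 := by omega
        rw [he]
        exact h23 0 hn2
      · rw [if_neg hib, if_neg hia]
        have e1 : i + 1 - n1 = (i - n1) + 1 := by omega
        rw [e1]
        exact h23 (i - n1) (by omega)
  · intro i hi
    dsimp only
    by_cases hia : i + 1 ≤ n1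
    · rw [if_pos (by omega : i ≤ n1), if_pos hia]
      exact h14 i (by omega)
    · by_cases hib : i ≤ n1
      · have hieq : i = n1 := by omega
        have hn2 : 0 < n2 := by omega
        rw [if_pos hib, if_neg hia, hieq, h11, ← h20]
        have he : n1 + 1 - n1 = 1 := by omega
        rw [he]
        exact h24 0 hn2
      · rw [if_neg hib, if_neg hia]
        have e1 : i + 1 - n1 = (i - n1) + 1 := by omega
        rw [e1]
        exact h24 (i - n1) (by omega)

theorem card_mono_of_steps {c : ℕ → Multiset P} {n : ℕ}
    (h : ∀ i < n, (c i).card ≤ (c (i + 1)).card) :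
    ∀ i j, i ≤ j → j ≤ n → (c i).card ≤ (c j).card := by
  have aux : ∀ d i, i + d ≤ n → (c i).card ≤ (c (i + d)).card := by
    intro d
    induction d with
    | zero => intro i _; simp
    | succ d ihd =>
        intro i hi
        have h1 := ihd i (by omega)
        have h2 := h (i + d) (by omega)
        have he : i + (d + 1) = (i + d) + 1 := by omega
        rw [he]
        exact le_trans h1 h2
  intro i j hij hjn
  have := aux (j - i) i (by omega)
  rwa [Nat.add_sub_cancel' hij] at this

theorem rtg_chain {α : Type*} {r : α → α → Prop} {a b : α}
    (h : Relation.ReflTransGen r a b) :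
    ∃ (n : ℕ) (c : ℕ → α), c 0 = a ∧ c n = b ∧ ∀ i < n, r (c i) (c (i + 1)) := by
  induction h with
  | refl => exact ⟨0, fun _ => a, rfl, rfl, fun i hi => absurd hi (by omega)⟩
  | @tail x y hab hr ih =>
      obtain ⟨n, c, hc0, hcn, hstep⟩ := ih
      refine ⟨n + 1, fun i => if i ≤ n then c i else y, by simp [hc0], ?_, ?_⟩
      · have : ¬ (n + 1 ≤ n) := by omega
        simp [this]
      · intro i hi
        dsimp only
        by_cases h1 : i + 1 ≤ n
        · rw [if_pos (by omega : i ≤ n), if_pos h1]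
          exact hstep i (by omega)
        · have hieq : i = n := by omega
          rw [if_pos (by omega : i ≤ n), if_neg h1, hieq, hcn]
          exact hr

/-- Equal-length factorizations are connected by bounded equal-length chains. -/
theorem lemmaA {P A : Type*} [Finite P] [DecidableEq P] [CommMonoid A] (val : P → A) :
    ∃ N1 : ℕ, ∀ s t : Multiset P, piF val s = piF val t → s.card = t.card →
      ∃ n c, ChainOk val N1 s t n c ∧ ∀ i ≤ n, (c i).card = s.card := by
  classical
  obtain ⟨R', hR'1, hR'2⟩ := redei_fin
    (fun x y : P →₀ ℕ => piF val (Finsupp.toMultiset x) = piF val (Finsupp.toMultiset y) ∧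
      (Finsupp.toMultiset x).card = (Finsupp.toMultiset y).card)
  set R : Finset (Multiset P × Multiset P) :=
    R'.image fun pq => (Finsupp.toMultiset pq.1, Finsupp.toMultiset pq.2) with hRdef
  set N1 := R.sup (fun pq => max pq.1.card pq.2.card) with hN1
  refine ⟨N1, ?_⟩
  have hRprop : ∀ pq ∈ R, piF val pq.1 = piF val pq.2 ∧ pq.1.card = pq.2.card := by
    intro pq hpq
    obtain ⟨pq', hpq', rfl⟩ := Finset.mem_image.mp hpq
    exact hR'1 pq' hpq'
  have hstep : ∀ u v : Multiset P, StepRel R u v →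
      piF val u = piF val v ∧ u.card = v.card ∧
        max (u - v).card (v - u).card ≤ N1 := by
    rintro u v ⟨p, q, t, hpq, rfl, rfl⟩
    have hπ : piF val p = piF val q ∧ p.card = q.card := by
      rcases hpq with h | h
      · exact (hRprop _ h)
      · exact ⟨(hRprop _ h).1.symm, (hRprop _ h).2.symm⟩
    have hsub1 : p + t - (q + t) ≤ p := by
      refine Multiset.le_iff_count.mpr fun a => ?_
      simp only [Multiset.count_sub, Multiset.count_add]
      omega
    have hsub2 : q + t - (p + t) ≤ q := by
      refine Multiset.le_iff_count.mpr fun a => ?_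
      simp only [Multiset.count_sub, Multiset.count_add]
      omega
    have hNb : max p.card q.card ≤ N1 := by
      rcases hpq with h | h
      · exact Finset.le_sup (f := fun pq => max pq.1.card pq.2.card) h
      · rw [max_comm]
        exact Finset.le_sup (f := fun pq => max pq.1.card pq.2.card) h
    refine ⟨by rw [piF_add, piF_add, hπ.1], by simp [Multiset.card_add, hπ.2], ?_⟩
    refine le_trans (max_le_max (Multiset.card_le_card hsub1) (Multiset.card_le_card hsub2)) hNb
  intro s t hπ hc
  have hσ' := hR'2 s.toFinsupp t.toFinsupp
    (by rw [Multiset.toFinsupp_toMultiset, Multiset.toFinsupp_toMultiset]; exact ⟨hπ, hc⟩)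
  have hliftstep : ∀ x y : P →₀ ℕ, StepRel R' x y →
      StepRel R (Finsupp.toMultiset x) (Finsupp.toMultiset y) := by
    intro x y hxy
    obtain ⟨p, q, t', hpq, rfl, rfl⟩ := hxy
    refine ⟨Finsupp.toMultiset p, Finsupp.toMultiset q, Finsupp.toMultiset t', ?_, ?_, ?_⟩
    · rcases hpq with h | h
      · exact Or.inl (Finset.mem_image_of_mem _ h)
      · exact Or.inr (Finset.mem_image_of_mem _ h)
    · exact map_add _ _ _
    · exact map_add _ _ _
  have hrtg : Relation.ReflTransGen (StepRel R) s t := by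
    have hl := Relation.ReflTransGen.lift (p := StepRel R)
      (fun x : P →₀ ℕ => Finsupp.toMultiset x) hliftstep _ _ hσ'
    simp only [Function.onFun, Multiset.toFinsupp_toMultiset] at hl
    exact hl
  obtain ⟨n, c, hc0, hcn, hstepc⟩ := rtg_chain hrtg
  have hkey : ∀ i ≤ n, piF val (c i) = piF val s ∧ (c i).card = s.card := by
    intro i
    induction i with
    | zero => intro _; simp [hc0]
    | succ k ih =>
        intro hk
        obtain ⟨h1, h2, _⟩ := hstep _ _ (hstepc k (by omega))
        obtain ⟨ih1, ih2⟩ := ih (by omega)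
        exact ⟨by rw [← h1, ih1], by rw [← h2, ih2]⟩
  exact ⟨n, c, ⟨hc0, hcn, fun i hi => (hkey i hi).1,
    fun i hi => (hstep _ _ (hstepc i hi)).2.2,
    fun i hi => by rw [(hkey i (by omega)).2, (hkey (i+1) (by omega)).2]⟩,
    fun i hi => (hkey i hi).2⟩

end Chains

/-- Bounded-distance jumps across adjacent lengths. -/
theorem lemmaB {P A : Type*} [Finite P] [DecidableEq P] [CommMonoid A] (val : P → A) :
    ∃ N2 : ℕ, ∀ s s' : Multiset P, piF val s = piF val s' → s.card < s'.card →
      (∀ w, piF val w = piF val s → s.card < w.card → w.card < s'.card → False) →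
      ∃ u u', piF val u = piF val s ∧ piF val u' = piF val s ∧
        u.card = s.card ∧ u'.card = s'.card ∧
        max (u - u').card (u' - u).card ≤ N2 := by
  classical
  haveI := Fintype.ofFinite P
  by_contra hcon
  push_neg at hcon
  choose s s' hπ hlt hadj hbad using hcon
  let f : ℕ → Option (P ⊕ P) → ℕ := fun n o =>
    match o with
    | none => (s' n).card - (s n).card
    | some (Sum.inl p) => Multiset.count p (s n)
    | some (Sum.inr p) => Multiset.count p (s' n)
  have hpwo : (Set.univ : Set (Option (P ⊕ P) → ℕ)).IsPWO :=
    by simpa using Set.IsPWO.pi (fun _ : Option (P ⊕ P) => Set.IsPWO.of_linearOrder (Set.univ : Set ℕ))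
  obtain ⟨g, hg⟩ := hpwo.exists_monotone_subseq (f := f) (fun n => Set.mem_univ _)
  set i0 := g 0 with hi0
  set C := max (Multiset.card (s i0)) (Multiset.card (s' i0)) with hC
  set j := g (C + 1) with hj
  have hmono : f i0 ≤ f j := hg (Nat.zero_le (C + 1))
  have hcount1 : ∀ p, Multiset.count p (s i0) ≤ Multiset.count p (s j) :=
    fun p => hmono (some (Sum.inl p))
  have hcount2 : ∀ p, Multiset.count p (s' i0) ≤ Multiset.count p (s' j) :=
    fun p => hmono (some (Sum.inr p))
  have hgap : (s' i0).card - (s i0).card ≤ (s' j).card - (s j).card := hmono none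
  have hsle : s i0 ≤ s j := Multiset.le_iff_count.mpr hcount1
  have hjge : C + 1 ≤ j := g.strictMono.le_apply
  set v := s j - s i0 + s' i0 with hv
  have hsplit : s j - s i0 + s i0 = s j := tsub_add_cancel_of_le hsle
  have hπv : piF val v = piF val (s j) := by
    rw [hv, piF_add, ← (hπ i0), ← piF_add, hsplit]
  have hcc : (s i0).card ≤ (s j).card := Multiset.card_le_card hsle
  have hcardeq : (s j - s i0).card + (s i0).card = (s j).card := by
    rw [← Multiset.card_add, hsplit]
  have hvcard : v.card = (s j - s i0).card + (s' i0).card := by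
    rw [hv, Multiset.card_add]
  have hkl_i := hlt i0
  have hkl_j := hlt j
  have hc1 : (s j).card < v.card := by omega
  have hc2 : v.card ≤ (s' j).card := by omega
  have hveq : v.card = (s' j).card := by
    rcases lt_or_ge v.card (s' j).card with hlt' | hge
    · exact (hadj j v hπv hc1 hlt').elim
    · omega
  have hd1 : v - s j ≤ s' i0 := by
    refine Multiset.le_iff_count.mpr fun p => ?_
    rw [Multiset.count_sub, hv, Multiset.count_add, Multiset.count_sub]
    have := hcount1 p
    omega
  have hd2 : s j - v ≤ s i0 := by
    refine Multiset.le_iff_count.mpr fun p => ?_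
    rw [Multiset.count_sub, hv, Multiset.count_add, Multiset.count_sub]
    have := hcount1 p
    omega
  have hdist : max ((s j) - v).card (v - (s j)).card ≤ C := by
    refine max_le ?_ ?_
    · exact le_trans (Multiset.card_le_card hd2) (le_max_left _ _)
    · exact le_trans (Multiset.card_le_card hd1) (le_max_right _ _)
  have hfinal := hbad j (s j) v rfl hπv rfl hveq
  have : j < C := lt_of_lt_of_le hfinal hdist
  omega

/-- Main combinatorial lemma: monotone bounded chains between any two
factorizations with `|z| ≤ |z'|`. -/
theorem lemmaM {P A : Type*} [Finite P] [DecidableEq P] [CommMonoid A] (val : P → A) :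
    ∃ N : ℕ, ∀ s s' : Multiset P, piF val s = piF val s' → s.card ≤ s'.card →
      ∃ (n : ℕ) (c : ℕ → Multiset P), ChainOk val N s s' n c := by
  classical
  obtain ⟨N1, hA⟩ := lemmaA val
  obtain ⟨N2, hB⟩ := lemmaB val
  refine ⟨max N1 N2, ?_⟩
  have key : ∀ (g : ℕ) (s s' : Multiset P), piF val s = piF val s' → s.card ≤ s'.card →
      s'.card - s.card ≤ g →
      ∃ (n : ℕ) (c : ℕ → Multiset P), ChainOk val (max N1 N2) s s' n c := by
    intro g
    induction g with
    | zero =>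
        intro s s' h1 h2 h3
        obtain ⟨n, c, hc, -⟩ := hA s s' h1 (by omega)
        exact ⟨n, c, chainOk_mono (le_max_left _ _) hc⟩
    | succ g ih =>
        intro s s' h1 h2 h3
        rcases eq_or_lt_of_le h2 with heq | hlt
        · obtain ⟨n, c, hc, -⟩ := hA s s' h1 heq
          exact ⟨n, c, chainOk_mono (le_max_left _ _) hc⟩
        · set k := s.card with hk
          set l := s'.card with hl
          set Q : ℕ → Prop := fun m => k ≤ m ∧ ∃ w : Multiset P, piF val w = piF val s ∧ w.card = m
            with hQdef
          haveI : DecidablePred Q := Classical.decPred Q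
          have hQk : Q k := ⟨le_rfl, s, rfl, rfl⟩
          have hkb : k ≤ l - 1 := by omega
          have hQk2 : Q (Nat.findGreatest Q (l - 1)) := Nat.findGreatest_spec hkb hQk
          have hk2le : Nat.findGreatest Q (l - 1) ≤ l - 1 := Nat.findGreatest_le (P := Q) (l - 1)
          have hkk2 : k ≤ Nat.findGreatest Q (l - 1) := Nat.le_findGreatest hkb hQk
          obtain ⟨-, w, hw1, hw2⟩ := hQk2
          have hadj : ∀ w', piF val w' = piF val w → w.card < w'.card → w'.card < s'.card →
              False := by
            intro w' hw' h5 h6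
            have hQw' : Q w'.card := ⟨by omega, w', by rw [hw', hw1], rfl⟩
            exact Nat.findGreatest_is_greatest (n := l - 1) (k := w'.card) (by omega) (by omega) hQw'
          obtain ⟨u, u', hu1, hu2, hu3, hu4, hu5⟩ := hB w s' (by rw [hw1, h1]) (by omega) hadj
          obtain ⟨n1, c1, hc1⟩ := ih s u (by rw [hu1, hw1]) (by omega) (by omega)
          have hc2 : ChainOk val (max N1 N2) u u' 1 (fun i => if i = 0 then u else u') :=
            chainOk_single (by rw [hu1, hu2]) (le_trans hu5 (le_max_right _ _)) (by omega)
          obtain ⟨n3, c3, hc3, -⟩ := hA u' s' (by rw [hu2, hw1, h1]) hu4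
          obtain ⟨c12, h12⟩ := chainOk_trans hc1 hc2
          obtain ⟨c, hcc⟩ := chainOk_trans h12 (chainOk_mono (le_max_left _ _) hc3)
          exact ⟨_, c, hcc⟩
  exact fun s s' h1 h2 => key _ s s' h1 h2 le_rfl

theorem map_sub_of_injective {α β : Type*} [DecidableEq α] [DecidableEq β] {f : α → β}
    (hf : Function.Injective f) (s t : Multiset α) :
    (s - t).map f = s.map f - t.map f := by
  refine Multiset.ext.mpr fun b => ?_
  by_cases hb : ∃ a, f a = b
  · obtain ⟨a, rfl⟩ := hb
    rw [Multiset.count_map_eq_count' f _ hf, Multiset.count_sub, Multiset.count_sub,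
      Multiset.count_map_eq_count' f _ hf, Multiset.count_map_eq_count' f _ hf]
  · have h0 : ∀ u : Multiset α, (u.map f).count b = 0 := by
      intro u
      rw [Multiset.count_eq_zero]
      intro hmem
      obtain ⟨a, -, ha⟩ := Multiset.mem_map.mp hmem
      exact hb ⟨a, ha⟩
    simp [Multiset.count_sub, h0]

theorem irreducible_mem_of_closure {A : Type*} [CommMonoid A]
    (hred : ∀ u : A, IsUnit u → u = 1)
    (S : Finset A) (hS : Submonoid.closure (S : Set A) = ⊤)
    {x : A} (hx : Irreducible x) : x ∈ (S : Set A) := by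
  have hxm : x ∈ Submonoid.closure (S : Set A) := by rw [hS]; trivial
  obtain ⟨m, hm, hprod⟩ := Submonoid.exists_multiset_of_mem_closure hxm
  have aux : ∀ (m : Multiset A), (∀ y ∈ m, y ∈ (S : Set A)) → Irreducible m.prod →
      m.prod ∈ (S : Set A) := by
    intro m
    induction m using Multiset.induction with
    | empty =>
        intro _ hirr
        rw [Multiset.prod_zero] at hirr
        exact absurd isUnit_one hirr.not_isUnit
    | cons y m ih =>
        intro hmem hirr
        rw [Multiset.prod_cons] at hirr ⊢
        rcases hirr.isUnit_or_isUnit rfl with hy | hm'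
        · rw [hred y hy, one_mul] at hirr ⊢
          exact ih (fun z hz => hmem z (Multiset.mem_cons_of_mem hz)) hirr
        · rw [hred _ hm', mul_one]
          exact hmem y (Multiset.mem_cons_self y m)
  rw [← hprod]
  exact aux m hm (hprod ▸ hx)

/-- If `H` is a commutative unit-cancellative monoid whose associated reduced monoid
`H_red = Associates H` is finitely generated, then the monotone catenary degree
`c_mon(H)` is finite. -/
theorem monotoneCatenaryDegree_finite_of_finitelyGenerated {H : Type*} [CommMonoid H]
    [DecidableEq (Associates H)]
    (hUC : ∀ a u : H, a * u = a → IsUnit u)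
    (hfg : ∃ S : Finset (Associates H),
      Submonoid.closure (S : Set (Associates H)) = ⊤) :
    ∃ N : ℕ, ∀ (a : H) (z z' : Multiset (Associates H)),
      IsFactorizationOf z a → IsFactorizationOf z' a → MonotoneNChain a N z z' := by
  classical
  obtain ⟨S, hS⟩ := hfg
  have hred : ∀ u : Associates H, IsUnit u → u = 1 := fun u hu =>
    (Associates.isUnit_iff_eq_one u).mp hu
  have hsub : {x : Associates H | Irreducible x} ⊆ (S : Set (Associates H)) :=
    fun x hx => irreducible_mem_of_closure hred S hS hx
  have hfin : {x : Associates H | Irreducible x}.Finite := S.finite_toSet.subset hsub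
  haveI hfinP : Finite {x : Associates H // Irreducible x} := hfin.to_subtype
  let val : {x : Associates H // Irreducible x} → Associates H := Subtype.val
  have hvalinj : Function.Injective val := Subtype.val_injective
  obtain ⟨N, hM⟩ := lemmaM (P := {x : Associates H // Irreducible x})
    (A := Associates H) val
  refine ⟨N, ?_⟩
  intro a z z' hz hz'
  obtain ⟨hzi, hzp⟩ := hz
  obtain ⟨hzi', hzp'⟩ := hz'
  let toP : ∀ (w : Multiset (Associates H)), (∀ x ∈ w, Irreducible x) →
      Multiset {x : Associates H // Irreducible x} :=
    fun w h => w.attach.map fun x => ⟨x.1, h x.1 x.2⟩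
  have hmap : ∀ w h, (toP w h).map val = w := by
    intro w h
    simp [toP, val, Multiset.map_map]
  have hcardP : ∀ w h, (toP w h).card = w.card := by
    intro w h
    simp [toP]
  have hpi : ∀ w h, piF val (toP w h) = w.prod := by
    intro w h
    rw [piF, hmap]
  have hπs : piF val (toP z hzi) = Associates.mk a := by rw [hpi]; exact hzp
  have hπs' : piF val (toP z' hzi') = Associates.mk a := by rw [hpi]; exact hzp'
  rcases le_total z.card z'.card with hle | hle
  · obtain ⟨n, c, hc0, hcn, hπc, hdc, hmc⟩ := hM (toP z hzi) (toP z' hzi')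
      (by rw [hπs, hπs']) (by rw [hcardP, hcardP]; exact hle)
    refine ⟨n, fun i => (c i).map val, ?_, ?_, ?_, ?_, Or.inl ?_⟩
    · show (c 0).map val = z
      rw [hc0]; exact hmap _ _
    · show (c n).map val = z'
      rw [hcn]; exact hmap _ _
    · intro i hi
      refine ⟨?_, ?_⟩
      · intro x hx
        obtain ⟨p, -, rfl⟩ := Multiset.mem_map.mp hx
        exact p.2
      · exact ((hπc i hi).trans hπs : piF val (c i) = Associates.mk a)
    · intro i hi
      have hd := hdc i hi
      show max ((c i).map val - (c (i+1)).map val).card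
        ((c (i+1)).map val - (c i).map val).card ≤ N
      rw [← map_sub_of_injective hvalinj, ← map_sub_of_injective hvalinj,
        Multiset.card_map, Multiset.card_map]
      exact hd
    · intro i j hij hjn
      show ((c i).map val).card ≤ ((c j).map val).card
      rw [Multiset.card_map, Multiset.card_map]
      exact card_mono_of_steps hmc i j hij hjn
  · obtain ⟨n, c, hc0, hcn, hπc, hdc, hmc⟩ := hM (toP z' hzi') (toP z hzi)
      (by rw [hπs, hπs']) (by rw [hcardP, hcardP]; exact hle)
    refine ⟨n, fun i => (c (n - i)).map val, ?_, ?_, ?_, ?_, Or.inr ?_⟩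
    · show (c (n - 0)).map val = z
      rw [Nat.sub_zero, hcn]; exact hmap _ _
    · show (c (n - n)).map val = z'
      rw [Nat.sub_self, hc0]; exact hmap _ _
    · intro i hi
      refine ⟨?_, ?_⟩
      · intro x hx
        obtain ⟨p, -, rfl⟩ := Multiset.mem_map.mp hx
        exact p.2
      · exact ((hπc (n - i) (by omega)).trans hπs' : piF val (c (n - i)) = Associates.mk a)
    · intro i hi
      have he : n - i = (n - (i + 1)) + 1 := by omega
      have hd := hdc (n - (i + 1)) (by omega)
      show max ((c (n - i)).map val - (c (n - (i+1))).map val).card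
        ((c (n - (i+1))).map val - (c (n - i)).map val).card ≤ N
      rw [← map_sub_of_injective hvalinj, ← map_sub_of_injective hvalinj,
        Multiset.card_map, Multiset.card_map, he, max_comm]
      exact hd
    · intro i j hij hjn
      show ((c (n - j)).map val).card ≤ ((c (n - i)).map val).card
      rw [Multiset.card_map, Multiset.card_map]
      exact card_mono_of_steps hmc (n - j) (n - i) (by omega) (by omega)
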